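/- Let k ≥ 2 be a natural number and h : ℝ → ℝ a twice continuously differentiable function that is positive on [0, π], satisfies h(θ) < h(0) for all θ ∈ (0, π], h'(0) = 0, and h''(0) < 0. Then the function θ ↦ sin(θ)^{k−1} / √(1 − (h(θ)/h(0))^{2k}) is integrable on the interval (0, π). -/

import Mathlib

open Real MeasureTheory

lemma limiting_integrand_aestronglyMeasurable (k : ℕ) (h : ℝ → ℝ)
    (hhc : Continuous h) :
    AEStronglyMeasurable
      (fun θ => Real.sin θ ^ (k - 1) / Real.sqrt (1 - (h θ / h 0) ^ (2 * k)))
      (volume : Measure ℝ) := by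
  apply Measurable.aestronglyMeasurable
  apply Measurable.div
  · exact (Real.continuous_sin.pow _).measurable
  · exact (Real.continuous_sqrt.comp
      (continuous_const.sub ((hhc.div_const (h 0)).pow (2*k)))).measurable

set_option maxHeartbeats 1000000

/-- For `k ≥ 2`, the limiting cohomology integrand
`θ ↦ sin(θ)^{k−1} / √(1 − (h(θ)/h(0))^{2k})` is integrable on `(0, π)`. -/
theorem limiting_integrand_integrable (k : ℕ) (hk : 2 ≤ k) (h : ℝ → ℝ)
    (hC2 : ContDiff ℝ 2 h) (hpos : ∀ θ ∈ Set.Icc (0 : ℝ) π, 0 < h θ)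
    (hmax : ∀ θ ∈ Set.Ioc (0 : ℝ) π, h θ < h 0)
    (hd1 : deriv h 0 = 0) (hd2 : deriv (deriv h) 0 < 0) :
    IntegrableOn
      (fun θ => Real.sin θ ^ (k - 1) / Real.sqrt (1 - (h θ / h 0) ^ (2 * k)))
      (Set.Ioo (0 : ℝ) π) := by
  have hh0 : 0 < h 0 := hpos 0 ⟨le_refl 0, pi_pos.le⟩
  have hhc : Continuous h := hC2.continuous
  set A : ℝ := -(deriv (deriv h) 0) with hA
  have hApos : 0 < A := by simp only [hA]; linarith
  have hdiff : Differentiable ℝ h := hC2.differentiable (by norm_num)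
  have hC1' : ContDiff ℝ 1 (deriv h) := by
    have h2 : ContDiff ℝ ((1 : ℕ) + 1) h := by exact_mod_cast hC2
    exact (contDiff_succ_iff_deriv.mp h2).2.2
  have hdd : HasDerivAt (deriv h) (deriv (deriv h) 0) 0 :=
    ((hC1'.differentiable (by norm_num)) 0).hasDerivAt
  -- slope of `deriv h` at 0 tends to `-A`
  have hslope : Filter.Tendsto (fun θ : ℝ => deriv h θ / θ) (nhdsWithin 0 {(0:ℝ)}ᶜ)
      (nhds (-A)) := by
    have H := hasDerivAt_iff_tendsto_slope.mp hdd
    rw [slope_fun_def_field] at H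
    simp only [hd1, sub_zero] at H
    simpa [hA, neg_neg] using H
  have hev : ∀ᶠ θ in nhdsWithin (0:ℝ) (Set.Ioi 0), deriv h θ / θ < -(A/2) :=
    (hslope.eventually_lt_const (by linarith)).filter_mono
      (nhdsWithin_mono 0 (fun x hx => ne_of_gt hx))
  obtain ⟨u, hu0, hu⟩ := mem_nhdsGT_iff_exists_Ioo_subset.mp hev
  have hu0' : (0:ℝ) < u := hu0
  set b : ℝ := min (u/2) (π/2) with hbdef
  have hb0 : 0 < b := lt_min (by linarith) (half_pos pi_pos)
  have hbu : b < u := lt_of_le_of_lt (min_le_left _ _) (by linarith)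
  have hbπ : b < π := lt_of_le_of_lt (min_le_right _ _) (by linarith [pi_pos])
  -- derivative bound on (0, u)
  have hderiv_bound : ∀ θ ∈ Set.Ioo (0:ℝ) u, deriv h θ < -(A/2) * θ := by
    intro θ hθ
    have h1 := hu hθ
    have hθ0 : 0 < θ := hθ.1
    calc deriv h θ = deriv h θ / θ * θ := by field_simp
    _ < -(A/2) * θ := mul_lt_mul_of_pos_right h1 hθ0
  -- the auxiliary function φ is strictly monotone on [0, b]
  set φ : ℝ → ℝ := fun θ => h 0 - h θ - A/4 * θ^2 with hφdef
  have hφderiv : ∀ x : ℝ, HasDerivAt φ (-(deriv h x) - A/4 * (2*x)) x := by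
    intro x
    have h1 : HasDerivAt (fun θ : ℝ => h 0 - h θ) (0 - deriv h x) x :=
      (hasDerivAt_const x (h 0)).sub ((hdiff x).hasDerivAt)
    have h2 : HasDerivAt (fun θ : ℝ => A/4 * θ^2) (A/4 * (2*x)) x := by
      have := (hasDerivAt_pow 2 x).const_mul (A/4)
      simpa [pow_one] using this
    exact (h1.sub h2).congr_deriv (by ring)
  have hφmono : StrictMonoOn φ (Set.Icc 0 b) := by
    apply strictMonoOn_of_deriv_pos (convex_Icc 0 b)
    · exact (Continuous.continuousOn (by continuity))
    · intro x hx
      rw [interior_Icc] at hx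
      rw [(hφderiv x).deriv]
      have hxu : x ∈ Set.Ioo (0:ℝ) u := ⟨hx.1, lt_trans hx.2 hbu⟩
      have := hderiv_bound x hxu
      nlinarith [hx.1]
  have hquad : ∀ θ ∈ Set.Ioc (0:ℝ) b, A/4 * θ^2 < h 0 - h θ := by
    intro θ hθ
    have := hφmono (Set.left_mem_Icc.mpr hb0.le) ⟨hθ.1.le, hθ.2⟩ hθ.1
    simp only [hφdef] at this
    nlinarith
  -- lower bound for the denominator expression on (0, b]
  set c : ℝ := Real.sqrt (A / (4 * h 0)) with hcdef
  have hc0 : 0 < c := Real.sqrt_pos.mpr (by positivity)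
  have hsqrt_lb : ∀ θ ∈ Set.Ioc (0:ℝ) b,
      c * θ ≤ Real.sqrt (1 - (h θ / h 0) ^ (2*k)) := by
    intro θ hθ
    have hθπ : θ ≤ π := hθ.2.trans hbπ.le
    have hx0 : 0 ≤ h θ / h 0 := le_of_lt (div_pos (hpos θ ⟨hθ.1.le, hθπ⟩) hh0)
    have hx1 : h θ / h 0 < 1 := (div_lt_one hh0).mpr (hmax θ ⟨hθ.1, hθπ⟩)
    have hpow : (h θ / h 0) ^ (2*k) ≤ h θ / h 0 := by
      calc (h θ / h 0) ^ (2*k) ≤ (h θ / h 0) ^ 1 :=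
        pow_le_pow_of_le_one hx0 hx1.le (by omega)
      _ = h θ / h 0 := pow_one _
    have hD : A / (4 * h 0) * θ^2 ≤ 1 - (h θ / h 0) ^ (2*k) := by
      have hq := hquad θ hθ
      have h1x : (h 0 - h θ) / h 0 ≤ 1 - (h θ / h 0) ^ (2*k) := by
        have heq : 1 - h θ / h 0 = (h 0 - h θ) / h 0 := by field_simp
        linarith [heq ▸ (sub_le_sub_left hpow 1)]
      have h2x : A / (4 * h 0) * θ^2 ≤ (h 0 - h θ) / h 0 := by
        rw [show A / (4 * h 0) * θ^2 = (A/4 * θ^2) / h 0 by field_simp]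
        gcongr
      linarith
    have hstep : c * θ = Real.sqrt (A / (4 * h 0) * θ^2) := by
      rw [Real.sqrt_mul (by positivity : (0:ℝ) ≤ A / (4 * h 0)) (θ^2),
        Real.sqrt_sq hθ.1.le]
    rw [hstep]
    exact Real.sqrt_le_sqrt hD
  -- positive lower bound for the denominator on [b, π]
  have hDcont : Continuous (fun θ : ℝ => 1 - (h θ / h 0) ^ (2*k)) :=
    continuous_const.sub ((hhc.div_const (h 0)).pow (2*k))
  obtain ⟨θm, hθm, hmin⟩ := isCompact_Icc.exists_isMinOn
    (Set.nonempty_Icc.mpr (hbπ.le)) hDcont.continuousOn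
  set δ : ℝ := 1 - (h θm / h 0) ^ (2*k) with hδdef
  have hδ0 : 0 < δ := by
    have hθm0 : θm ∈ Set.Ioc (0:ℝ) π := ⟨lt_of_lt_of_le hb0 hθm.1, hθm.2⟩
    have hx0 : 0 ≤ h θm / h 0 := le_of_lt (div_pos (hpos θm ⟨hθm0.1.le, hθm0.2⟩) hh0)
    have hx1 : h θm / h 0 < 1 := (div_lt_one hh0).mpr (hmax θm hθm0)
    have : (h θm / h 0) ^ (2*k) < 1 := pow_lt_one₀ hx0 hx1 (by omega)
    simp only [hδdef]; linarith
  have hsqrtδ : 0 < Real.sqrt δ := Real.sqrt_pos.mpr hδ0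
  -- the global bound
  set M : ℝ := max (π ^ (k-2) / c) (1 / Real.sqrt δ) with hMdef
  have hbound : ∀ θ ∈ Set.Ioo (0:ℝ) π,
      ‖Real.sin θ ^ (k - 1) / Real.sqrt (1 - (h θ / h 0) ^ (2 * k))‖ ≤ M := by
    intro θ hθ
    have hsin0 : 0 ≤ Real.sin θ := Real.sin_nonneg_of_nonneg_of_le_pi hθ.1.le hθ.2.le
    have hf0 : 0 ≤ Real.sin θ ^ (k - 1) / Real.sqrt (1 - (h θ / h 0) ^ (2 * k)) :=
      div_nonneg (pow_nonneg hsin0 _) (Real.sqrt_nonneg _)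
    rw [Real.norm_eq_abs, abs_of_nonneg hf0]
    rcases le_or_gt θ b with hcase | hcase
    · -- near zero
      have hmem : θ ∈ Set.Ioc (0:ℝ) b := ⟨hθ.1, hcase⟩
      have hden := hsqrt_lb θ hmem
      have hnum : Real.sin θ ^ (k-1) ≤ θ ^ (k-1) :=
        pow_le_pow_left₀ hsin0 (Real.sin_le hθ.1.le) _
      have hcθ : 0 < c * θ := mul_pos hc0 hθ.1
      have step1 : Real.sin θ ^ (k - 1) / Real.sqrt (1 - (h θ / h 0) ^ (2 * k))
          ≤ θ ^ (k-1) / (c * θ) :=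
        div_le_div₀ (pow_nonneg hθ.1.le _) hnum hcθ hden
      have step2 : θ ^ (k-1) / (c * θ) = θ ^ (k-2) / c := by
        have hθne : θ ≠ 0 := ne_of_gt hθ.1
        have hcne : c ≠ 0 := ne_of_gt hc0
        rw [show k - 1 = (k - 2) + 1 by omega, pow_succ]
        field_simp
      have step3 : θ ^ (k-2) / c ≤ π ^ (k-2) / c := by
        gcongr
        · exact hθ.1.le
        · exact hθ.2.le
      calc Real.sin θ ^ (k - 1) / Real.sqrt (1 - (h θ / h 0) ^ (2 * k))
          ≤ θ ^ (k-1) / (c * θ) := step1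
        _ = θ ^ (k-2) / c := step2
        _ ≤ π ^ (k-2) / c := step3
        _ ≤ M := le_max_left _ _
    · -- away from zero
      have hmem : θ ∈ Set.Icc b π := ⟨hcase.le, hθ.2.le⟩
      have hδθ : δ ≤ 1 - (h θ / h 0) ^ (2*k) := hmin hmem
      have hden : Real.sqrt δ ≤ Real.sqrt (1 - (h θ / h 0) ^ (2*k)) :=
        Real.sqrt_le_sqrt hδθ
      have hnum : Real.sin θ ^ (k-1) ≤ 1 :=
        pow_le_one₀ hsin0 (Real.sin_le_one θ)
      calc Real.sin θ ^ (k - 1) / Real.sqrt (1 - (h θ / h 0) ^ (2 * k))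
          ≤ 1 / Real.sqrt δ := div_le_div₀ zero_le_one hnum hsqrtδ hden
        _ ≤ M := le_max_right _ _
  -- conclude
  exact Measure.integrableOn_of_bounded measure_Ioo_lt_top.ne
    (limiting_integrand_aestronglyMeasurable k h hhc)
    ((ae_restrict_iff' measurableSet_Ioo).mpr (Filter.Eventually.of_forall hbound))
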